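/- Let G be a finite simple graph and f a uniformly random labeling with fixed label counts. For pairwise distinct labels i, j, k, l, Cov(R_{ij}, R_{kl}) = (|G|^2 - sum_t |G_t|^2 + |G|) * 4 n_i n_j n_k n_l/(N(N-1)(N-2)(N-3)) - E(R_{ij}) E(R_{kl}). -/
import Mathlib
set_option linter.unusedSectionVars false


open Finset

variable {V : Type*} [Fintype V] [DecidableEq V] {K : ℕ}

/-- The set of labelings `f : V → Fin K` with exactly `n k` vertices labeled `k`. -/
def labelings (n : Fin K → ℕ) : Finset (V → Fin K) :=
  Finset.univ.filter fun f => ∀ k, (Finset.univ.filter fun x => f x = k).card = n k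

/-- Probability of an event under the uniform distribution on `labelings n`. -/
noncomputable def prob (n : Fin K → ℕ) (P : (V → Fin K) → Prop) [DecidablePred P] : ℝ :=
  (((labelings n).filter P).card : ℝ) / (((labelings n : Finset (V → Fin K))).card : ℝ)

/-- Expectation of a real random variable under the uniform distribution on `labelings n`. -/
noncomputable def expect (n : Fin K → ℕ) (X : (V → Fin K) → ℝ) : ℝ :=
  (∑ f ∈ labelings n, X f) / (((labelings n : Finset (V → Fin K))).card : ℝ)

/-- Covariance under the uniform distribution on `labelings n`. -/
noncomputable def covar (n : Fin K → ℕ) (X Y : (V → Fin K) → ℝ) : ℝ :=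
  expect n (fun f => (X f - expect n X) * (Y f - expect n Y))

/-- `Rcount G f i j` is the number of edges of `G` whose endpoint labels (under `f`)
are exactly the unordered pair `{i, j}`. -/
def Rcount (G : SimpleGraph V) [DecidableRel G.Adj] (f : V → Fin K) (i j : Fin K) : ℕ :=
  (G.edgeFinset.filter fun e => Sym2.map f e = s(i, j)).card


section Aux
variable (n : Fin K → ℕ)

lemma fiber_comp (σ : Equiv.Perm V) (f : V → Fin K) (k : Fin K) :
    (Finset.univ.filter fun x => f (σ x) = k).card
      = (Finset.univ.filter fun x => f x = k).card := by
  apply Finset.card_bij (fun x _ => σ x)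
  · intro a ha; simp_all
  · intro a _ b _ hab; exact σ.injective hab
  · intro b hb; exact ⟨σ.symm b, by simp_all, by simp⟩

lemma mem_labelings_comp (σ : Equiv.Perm V) (f : V → Fin K) :
    (f ∘ σ) ∈ labelings n ↔ f ∈ labelings (V := V) n := by
  simp only [labelings, Finset.mem_filter, Finset.mem_univ, true_and, Function.comp]
  constructor <;> intro h k <;> rw [← h k]
  · exact (fiber_comp σ f k).symm
  · exact fiber_comp σ f k

lemma exists_perm_comp : ∀ (r : ℕ) (g₁ g₂ : Fin r → V), Function.Injective g₁ →
    Function.Injective g₂ → ∃ σ : Equiv.Perm V, ∀ x, σ (g₁ x) = g₂ x := by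
  intro r
  induction r with
  | zero => exact fun g₁ g₂ _ _ => ⟨1, fun x => x.elim0⟩
  | succ r ih =>
    intro g₁ g₂ h₁ h₂
    obtain ⟨σ, hσ⟩ := ih (g₁ ∘ Fin.castSucc) (g₂ ∘ Fin.castSucc)
      (h₁.comp (Fin.castSucc_injective r)) (h₂.comp (Fin.castSucc_injective r))
    refine ⟨σ.trans (Equiv.swap (σ (g₁ (Fin.last r))) (g₂ (Fin.last r))), fun x => ?_⟩
    rcases Fin.eq_castSucc_or_eq_last x with ⟨y, rfl⟩ | rfl
    · have hy := hσ y
      simp only [Equiv.trans_apply, Function.comp] at hy ⊢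
      rw [hy, Equiv.swap_apply_of_ne_of_ne]
      · intro h
        have : g₁ (Fin.last r) = g₁ y.castSucc := σ.injective (by rw [← hy] at h; exact h.symm)
        exact (Fin.castSucc_lt_last y).ne' (h₁ this)
      · intro h
        exact (Fin.castSucc_lt_last y).ne (h₂ h)
    · simp [Equiv.trans_apply, Equiv.swap_apply_left]

lemma covar_eq (X Y : (V → Fin K) → ℝ) :
    covar n X Y = expect n (fun f => X f * Y f) - expect n X * expect n Y := by
  rcases eq_or_ne (((labelings (V := V) n).card : ℝ)) 0 with h | h
  · simp [covar, _root_.expect, h]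
  · unfold covar _root_.expect
    have expand : ∀ a b : ℝ, (∑ f ∈ labelings (V := V) n, (X f - a) * (Y f - b))
        = (∑ f ∈ labelings (V := V) n, X f * Y f) - b * ∑ f ∈ labelings (V := V) n, X f
          - a * ∑ f ∈ labelings (V := V) n, Y f + ((labelings (V := V) n).card : ℝ) * (a * b) := by
      intro a b
      rw [Finset.sum_congr rfl (fun f _ => by ring : ∀ f ∈ labelings (V := V) n,
        (X f - a) * (Y f - b) = X f * Y f - b * X f - a * Y f + a * b)]
      rw [Finset.sum_add_distrib, Finset.sum_sub_distrib, Finset.sum_sub_distrib,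
        ← Finset.mul_sum, ← Finset.mul_sum, Finset.sum_const, nsmul_eq_mul]
    simp only [expand]
    field_simp
    ring


variable (i j k l : Fin K)

/-- Number of labelings with prescribed values at four vertices. -/
def F4 (a b c d : V) : ℕ :=
  ((labelings n).filter fun f => f a = i ∧ f b = j ∧ f c = k ∧ f d = l).card

lemma F4_const (a b c d a' b' c' d' : V)
    (h : Function.Injective ![a, b, c, d]) (h' : Function.Injective ![a', b', c', d']) :
    F4 n i j k l a b c d = F4 n i j k l a' b' c' d' := by
  obtain ⟨σ, hσ⟩ := exists_perm_comp 4 ![a, b, c, d] ![a', b', c', d'] h h'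
  have h0 : σ a = a' := by simpa using hσ 0
  have h1 : σ b = b' := by simpa using hσ 1
  have h2 : σ c = c' := by simpa using hσ 2
  have h3 : σ d = d' := by simpa using hσ 3
  unfold F4
  apply Finset.card_bij (fun f _ => f ∘ σ.symm)
  · intro f hf
    simp only [Finset.mem_filter] at hf ⊢
    refine ⟨(mem_labelings_comp n σ.symm f).2 hf.1, ?_⟩
    simp only [Function.comp_apply, ← h0, ← h1, ← h2, ← h3, Equiv.symm_apply_apply]
    exact hf.2
  · intro f _ g _ hfg
    funext x
    have := congrFun hfg (σ x)
    simpa using this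
  · intro g hg
    simp only [Finset.mem_filter] at hg
    refine ⟨g ∘ σ, ?_, ?_⟩
    · simp only [Finset.mem_filter]
      constructor
      · exact (mem_labelings_comp n σ g).2 hg.1
      · simp only [Function.comp_apply, h0, h1, h2, h3]
        exact hg.2
    · funext x; simp

lemma F4_zero (hij : i ≠ j) (hik : i ≠ k) (hil : i ≠ l) (hjk : j ≠ k) (hjl : j ≠ l)
    (hkl : k ≠ l) (a b c d : V)
    (h : ¬ (a ≠ b ∧ a ≠ c ∧ a ≠ d ∧ b ≠ c ∧ b ≠ d ∧ c ≠ d)) :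
    F4 n i j k l a b c d = 0 := by
  simp only [not_and_or, not_not] at h
  apply Finset.card_eq_zero.2
  apply Finset.filter_eq_empty_iff.2
  intro f _
  rintro ⟨e1, e2, e3, e4⟩
  rcases h with h | h | h | h | h | h
  · exact hij (by rw [← e1, ← e2, h])
  · exact hik (by rw [← e1, ← e3, h])
  · exact hil (by rw [← e1, ← e4, h])
  · exact hjk (by rw [← e2, ← e3, h])
  · exact hjl (by rw [← e2, ← e4, h])
  · exact hkl (by rw [← e3, ← e4, h])

lemma F4_sum :
    (∑ a : V, ∑ b : V, ∑ c : V, ∑ d : V, F4 n i j k l a b c d)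
      = (labelings (V := V) n).card * (n i * (n j * (n k * n l))) := by
  unfold F4
  simp only [Finset.card_filter]
  conv_lhs => enter [2, a, 2, b, 2, c]; rw [Finset.sum_comm]
  conv_lhs => enter [2, a, 2, b]; rw [Finset.sum_comm]
  conv_lhs => enter [2, a]; rw [Finset.sum_comm]
  rw [Finset.sum_comm]
  rw [Finset.sum_congr rfl (fun f hf => ?_), Finset.sum_const, smul_eq_mul]
  have hf' : ∀ t, (Finset.univ.filter fun x => f x = t).card = n t := by
    simpa [labelings] using hf
  have prod_ite : ∀ a b c d : V,
      (if f a = i ∧ f b = j ∧ f c = k ∧ f d = l then (1 : ℕ) else 0)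
      = (if f a = i then 1 else 0) * ((if f b = j then 1 else 0) *
          ((if f c = k then 1 else 0) * (if f d = l then 1 else 0))) := by
    intro a b c d
    by_cases h1 : f a = i <;> by_cases h2 : f b = j <;> by_cases h3 : f c = k <;>
      by_cases h4 : f d = l <;> simp [h1, h2, h3, h4]
  simp only [prod_ite, ← Finset.mul_sum, ← Finset.sum_mul]
  simp only [← Finset.card_filter, hf']


lemma inj4 {a b c d : V} (h : a ≠ b ∧ a ≠ c ∧ a ≠ d ∧ b ≠ c ∧ b ≠ d ∧ c ≠ d) :
    Function.Injective ![a, b, c, d] := by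
  obtain ⟨h1, h2, h3, h4, h5, h6⟩ := h
  intro x y hxy
  fin_cases x <;> fin_cases y <;> simp_all

lemma card_compl_finset (s : Finset V) :
    (Finset.univ.filter fun d : V => d ∉ s).card = Fintype.card V - s.card := by
  have h : Finset.univ.filter (fun d : V => d ∉ s) = Finset.univ \ s := by ext x; simp
  rw [h, Finset.card_sdiff_of_subset (Finset.subset_univ s), Finset.card_univ]

lemma count_tuples :
    (∑ a : V, ∑ b : V, ∑ c : V, ∑ d : V,
        if a ≠ b ∧ a ≠ c ∧ a ≠ d ∧ b ≠ c ∧ b ≠ d ∧ c ≠ d then (1 : ℕ) else 0)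
      = Fintype.card V * (Fintype.card V - 1) * (Fintype.card V - 2)
          * (Fintype.card V - 3) := by
  have step_d : ∀ a b c : V,
      (∑ d : V, if a ≠ b ∧ a ≠ c ∧ a ≠ d ∧ b ≠ c ∧ b ≠ d ∧ c ≠ d then (1 : ℕ) else 0)
      = if a ≠ b ∧ a ≠ c ∧ b ≠ c then Fintype.card V - 3 else 0 := by
    intro a b c
    by_cases h : a ≠ b ∧ a ≠ c ∧ b ≠ c
    · obtain ⟨h1, h2, h3⟩ := h
      rw [if_pos ⟨h1, h2, h3⟩]
      have key : ∀ d : V, (a ≠ b ∧ a ≠ c ∧ a ≠ d ∧ b ≠ c ∧ b ≠ d ∧ c ≠ d)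
          ↔ d ∉ ({a, b, c} : Finset V) := by
        intro d
        simp only [Finset.mem_insert, Finset.mem_singleton, not_or]
        constructor
        · rintro ⟨_, _, hd1, _, hd2, hd3⟩; exact ⟨Ne.symm hd1, Ne.symm hd2, Ne.symm hd3⟩
        · rintro ⟨hd1, hd2, hd3⟩
          exact ⟨h1, h2, Ne.symm hd1, h3, Ne.symm hd2, Ne.symm hd3⟩
      simp only [key]
      rw [← Finset.card_filter, card_compl_finset]
      congr 1
      rw [Finset.card_insert_of_notMem (by simp [h1, h2]),
        Finset.card_insert_of_notMem (by simp [h3]), Finset.card_singleton]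
    · rw [if_neg h, Finset.sum_eq_zero]
      intro d _
      rw [if_neg]
      intro hc
      exact h ⟨hc.1, hc.2.1, hc.2.2.2.1⟩
  have step_c : ∀ a b : V,
      (∑ c : V, if a ≠ b ∧ a ≠ c ∧ b ≠ c then Fintype.card V - 3 else 0)
      = if a ≠ b then (Fintype.card V - 2) * (Fintype.card V - 3) else 0 := by
    intro a b
    by_cases h : a ≠ b
    · rw [if_pos h]
      have key : ∀ c : V, (a ≠ b ∧ a ≠ c ∧ b ≠ c) ↔ c ∉ ({a, b} : Finset V) := by
        intro c
        simp only [Finset.mem_insert, Finset.mem_singleton, not_or]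
        constructor
        · rintro ⟨_, hd1, hd2⟩; exact ⟨Ne.symm hd1, Ne.symm hd2⟩
        · rintro ⟨hd1, hd2⟩; exact ⟨h, Ne.symm hd1, Ne.symm hd2⟩
      simp only [key]
      rw [← Finset.sum_filter, Finset.sum_const, smul_eq_mul]
      congr 1
      have : Finset.univ.filter (fun c : V => c ∉ ({a, b} : Finset V))
          = Finset.univ.filter (fun c : V => c ∉ ({a, b} : Finset V)) := rfl
      rw [show (Finset.univ.filter fun c : V => c ∉ ({a, b} : Finset V)).card
          = Fintype.card V - ({a, b} : Finset V).card from card_compl_finset _]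
      congr 1
      rw [Finset.card_insert_of_notMem (by simp [h]), Finset.card_singleton]
    · rw [if_neg h, Finset.sum_eq_zero]
      intro c _
      rw [if_neg]
      intro hc
      exact h hc.1
  have step_b : ∀ a : V,
      (∑ b : V, if a ≠ b then (Fintype.card V - 2) * (Fintype.card V - 3) else 0)
      = (Fintype.card V - 1) * ((Fintype.card V - 2) * (Fintype.card V - 3)) := by
    intro a
    have key : ∀ b : V, (a ≠ b) ↔ b ∉ ({a} : Finset V) := by
      intro b; simp [eq_comm]
    simp only [key]
    rw [← Finset.sum_filter, Finset.sum_const, smul_eq_mul,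
      show (Finset.univ.filter fun b : V => b ∉ ({a} : Finset V)).card
          = Fintype.card V - ({a} : Finset V).card from card_compl_finset _,
      Finset.card_singleton]
  simp only [step_d, step_c, step_b]
  rw [Finset.sum_const, smul_eq_mul, Finset.card_univ]
  ring

lemma F4_count (hij : i ≠ j) (hik : i ≠ k) (hil : i ≠ l) (hjk : j ≠ k) (hjl : j ≠ l)
    (hkl : k ≠ l) (a b c d : V)
    (ha : a ≠ b ∧ a ≠ c ∧ a ≠ d ∧ b ≠ c ∧ b ≠ d ∧ c ≠ d) :
    F4 n i j k l a b c d * (Fintype.card V * (Fintype.card V - 1) * (Fintype.card V - 2)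
        * (Fintype.card V - 3))
      = (labelings (V := V) n).card * (n i * (n j * (n k * n l))) := by
  rw [← F4_sum n i j k l, ← count_tuples (V := V), Finset.mul_sum]
  apply Finset.sum_congr rfl
  intro a' _
  rw [Finset.mul_sum]
  apply Finset.sum_congr rfl
  intro b' _
  rw [Finset.mul_sum]
  apply Finset.sum_congr rfl
  intro c' _
  rw [Finset.mul_sum]
  apply Finset.sum_congr rfl
  intro d' _
  by_cases h' : a' ≠ b' ∧ a' ≠ c' ∧ a' ≠ d' ∧ b' ≠ c' ∧ b' ≠ d' ∧ c' ≠ d'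
  · rw [if_pos h', mul_one]
    exact F4_const n i j k l a b c d a' b' c' d' (inj4 ha) (inj4 h')
  · rw [if_neg h', mul_zero]
    exact (F4_zero n i j k l hij hik hil hjk hjl hkl a' b' c' d' h').symm


/-- Number of labelings with prescribed values at two vertices. -/
def F2 (p q : Fin K) (a b : V) : ℕ :=
  ((labelings n).filter fun f => f a = p ∧ f b = q).card

lemma inj2 {a b : V} (h : a ≠ b) : Function.Injective ![a, b] := by
  intro x y hxy
  fin_cases x <;> fin_cases y <;> simp_all

lemma F2_const (p q : Fin K) (a b a' b' : V) (h : a ≠ b) (h' : a' ≠ b') :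
    F2 n p q a b = F2 n p q a' b' := by
  obtain ⟨σ, hσ⟩ := exists_perm_comp 2 ![a, b] ![a', b'] (inj2 h) (inj2 h')
  have h0 : σ a = a' := by simpa using hσ 0
  have h1 : σ b = b' := by simpa using hσ 1
  unfold F2
  apply Finset.card_bij (fun f _ => f ∘ σ.symm)
  · intro f hf
    simp only [Finset.mem_filter] at hf ⊢
    refine ⟨(mem_labelings_comp n σ.symm f).2 hf.1, ?_⟩
    simp only [Function.comp_apply, ← h0, ← h1, Equiv.symm_apply_apply]
    exact hf.2
  · intro f _ g _ hfg
    funext x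
    have := congrFun hfg (σ x)
    simpa using this
  · intro g hg
    simp only [Finset.mem_filter] at hg
    refine ⟨g ∘ σ, ?_, ?_⟩
    · simp only [Finset.mem_filter]
      refine ⟨(mem_labelings_comp n σ g).2 hg.1, ?_⟩
      simp only [Function.comp_apply, h0, h1]
      exact hg.2
    · funext x; simp

lemma F2_zero (p q : Fin K) (hpq : p ≠ q) (a : V) : F2 n p q a a = 0 := by
  apply Finset.card_eq_zero.2
  apply Finset.filter_eq_empty_iff.2
  intro f _
  rintro ⟨e1, e2⟩
  exact hpq (by rw [← e1, ← e2])

lemma F2_sum (p q : Fin K) :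
    (∑ a : V, ∑ b : V, F2 n p q a b)
      = (labelings (V := V) n).card * (n p * n q) := by
  unfold F2
  simp only [Finset.card_filter]
  conv_lhs => enter [2, a]; rw [Finset.sum_comm]
  rw [Finset.sum_comm]
  rw [Finset.sum_congr rfl (fun f hf => ?_), Finset.sum_const, smul_eq_mul]
  have hf' : ∀ t, (Finset.univ.filter fun x => f x = t).card = n t := by
    simpa [labelings] using hf
  have prod_ite : ∀ a b : V, (if f a = p ∧ f b = q then (1 : ℕ) else 0)
      = (if f a = p then 1 else 0) * (if f b = q then 1 else 0) := by
    intro a b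
    by_cases h1 : f a = p <;> by_cases h2 : f b = q <;> simp [h1, h2]
  simp only [prod_ite, ← Finset.mul_sum, ← Finset.sum_mul]
  simp only [← Finset.card_filter, hf']

lemma count_pairs :
    (∑ a : V, ∑ b : V, if a ≠ b then (1 : ℕ) else 0)
      = Fintype.card V * (Fintype.card V - 1) := by
  have step_b : ∀ a : V, (∑ b : V, if a ≠ b then (1 : ℕ) else 0)
      = Fintype.card V - 1 := by
    intro a
    have key : ∀ b : V, (a ≠ b) ↔ b ∉ ({a} : Finset V) := by
      intro b; simp [eq_comm]
    simp only [key]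
    rw [← Finset.card_filter,
      show (Finset.univ.filter fun b : V => b ∉ ({a} : Finset V)).card
          = Fintype.card V - ({a} : Finset V).card from card_compl_finset _,
      Finset.card_singleton]
  simp only [step_b]
  rw [Finset.sum_const, smul_eq_mul, Finset.card_univ]

lemma F2_count (p q : Fin K) (hpq : p ≠ q) (a b : V) (h : a ≠ b) :
    F2 n p q a b * (Fintype.card V * (Fintype.card V - 1))
      = (labelings (V := V) n).card * (n p * n q) := by
  rw [← F2_sum n p q, ← count_pairs (V := V), Finset.mul_sum]
  apply Finset.sum_congr rfl
  intro a' _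
  rw [Finset.mul_sum]
  apply Finset.sum_congr rfl
  intro b' _
  by_cases h' : a' ≠ b'
  · rw [if_pos h', mul_one]
    exact F2_const n p q a b a' b' h h'
  · rw [if_neg h', mul_zero]
    push_neg at h'
    subst h'
    exact (F2_zero n p q hpq a').symm


/-- Two unordered pairs share no vertex. -/
def SDisj (e e' : Sym2 V) : Prop := ∀ x, x ∈ e → x ∉ e'

instance (e e' : Sym2 V) : Decidable (SDisj e e') := by
  unfold SDisj; infer_instance

lemma not_sdisj_iff (a b c d : V) :
    ¬ SDisj s(a, b) s(c, d) ↔ (a = c ∨ a = d ∨ b = c ∨ b = d) := by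
  unfold SDisj
  push_neg
  constructor
  · rintro ⟨x, hx, hx'⟩
    rw [Sym2.mem_iff] at hx hx'
    rcases hx with rfl | rfl <;> rcases hx' with rfl | rfl <;> tauto
  · intro h
    rcases h with rfl | rfl | rfl | rfl
    · exact ⟨a, by simp, by simp⟩
    · exact ⟨a, by simp, by simp⟩
    · exact ⟨b, by simp, by simp⟩
    · exact ⟨b, by simp, by simp⟩


variable (G : SimpleGraph V) [DecidableRel G.Adj]

lemma edge_count (p q : Fin K) (hpq : p ≠ q) (e : Sym2 V) (he : e ∈ G.edgeFinset) :
    ((labelings n).filter fun f => Sym2.map f e = s(p, q)).card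
        * (Fintype.card V * (Fintype.card V - 1))
      = 2 * ((labelings (V := V) n).card * (n p * n q)) := by
  induction e using Sym2.inductionOn with
  | hf a b =>
    have hab : a ≠ b := G.ne_of_adj (G.mem_edgeSet.mp (SimpleGraph.mem_edgeFinset.mp he))
    have hcond : ∀ f : V → Fin K, (Sym2.map f s(a, b) = s(p, q))
        ↔ ((f a = p ∧ f b = q) ∨ (f a = q ∧ f b = p)) := by
      intro f; rw [Sym2.map_pair_eq, Sym2.eq_iff]
    have hcard : ((labelings n).filter fun f : V → Fin K => Sym2.map f s(a, b) = s(p, q)).card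
        = F2 n p q a b + F2 n q p a b := by
      unfold F2
      rw [Finset.filter_congr (fun f _ => by rw [hcond f]), Finset.filter_or,
        Finset.card_union_of_disjoint]
      rw [Finset.disjoint_left]
      intro f hf1 hf2
      simp only [Finset.mem_filter] at hf1 hf2
      exact hpq (hf1.2.1 ▸ hf2.2.1.symm ▸ rfl)
    rw [hcard, add_mul, F2_count n p q hpq a b hab, F2_count n q p hpq.symm a b hab]
    ring

lemma Rcount_sum (p q : Fin K) (hpq : p ≠ q) :
    (∑ f ∈ labelings (V := V) n, Rcount G f p q)
        * (Fintype.card V * (Fintype.card V - 1))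
      = 2 * G.edgeFinset.card * ((labelings (V := V) n).card * (n p * n q)) := by
  unfold Rcount
  simp only [Finset.card_filter]
  rw [Finset.sum_comm]
  simp only [← Finset.card_filter]
  rw [Finset.sum_mul,
    Finset.sum_congr rfl (fun e he => edge_count n G p q hpq e he),
    Finset.sum_const, smul_eq_mul]
  ring


lemma edge_pair_count (hij : i ≠ j) (hik : i ≠ k) (hil : i ≠ l) (hjk : j ≠ k)
    (hjl : j ≠ l) (hkl : k ≠ l) (e e' : Sym2 V)
    (he : e ∈ G.edgeFinset) (he' : e' ∈ G.edgeFinset) :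
    ((labelings n).filter fun f => Sym2.map f e = s(i, j) ∧ Sym2.map f e' = s(k, l)).card
        * (Fintype.card V * (Fintype.card V - 1) * (Fintype.card V - 2) * (Fintype.card V - 3))
      = (if SDisj e e' then 1 else 0)
          * (4 * ((labelings (V := V) n).card * (n i * (n j * (n k * n l))))) := by
  induction e using Sym2.inductionOn with
  | hf a b =>
  induction e' using Sym2.inductionOn with
  | hf c d =>
    have hab : a ≠ b := G.ne_of_adj (G.mem_edgeSet.mp (SimpleGraph.mem_edgeFinset.mp he))
    have hcd : c ≠ d := G.ne_of_adj (G.mem_edgeSet.mp (SimpleGraph.mem_edgeFinset.mp he'))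
    by_cases hd : SDisj s(a, b) s(c, d)
    · have hac : a ≠ c := fun h => hd a (by simp) (by simp [h])
      have had : a ≠ d := fun h => hd a (by simp) (by simp [h])
      have hbc : b ≠ c := fun h => hd b (by simp) (by simp [h])
      have hbd : b ≠ d := fun h => hd b (by simp) (by simp [h])
      have hcard : ((labelings n).filter fun f : V → Fin K =>
            Sym2.map f s(a, b) = s(i, j) ∧ Sym2.map f s(c, d) = s(k, l)).card
          = F4 n i j k l a b c d + F4 n i j k l b a c d
            + F4 n i j k l a b d c + F4 n i j k l b a d c := by
        unfold F4
        simp only [Finset.card_filter]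
        rw [← Finset.sum_add_distrib, ← Finset.sum_add_distrib, ← Finset.sum_add_distrib]
        apply Finset.sum_congr rfl
        intro f _
        rw [Sym2.map_pair_eq, Sym2.map_pair_eq]
        by_cases h1 : f a = i <;> by_cases h2 : f b = j <;> by_cases h3 : f a = j <;>
          by_cases h4 : f b = i <;> by_cases h5 : f c = k <;> by_cases h6 : f d = l <;>
          by_cases h7 : f c = l <;> by_cases h8 : f d = k <;>
          simp_all [Sym2.eq_iff]
      rw [if_pos hd, hcard, add_mul, add_mul, add_mul,
        F4_count n i j k l hij hik hil hjk hjl hkl a b c d ⟨hab, hac, had, hbc, hbd, hcd⟩,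
        F4_count n i j k l hij hik hil hjk hjl hkl b a c d
          ⟨hab.symm, hbc, hbd, hac, had, hcd⟩,
        F4_count n i j k l hij hik hil hjk hjl hkl a b d c
          ⟨hab, had, hac, hbd, hbc, hcd.symm⟩,
        F4_count n i j k l hij hik hil hjk hjl hkl b a d c
          ⟨hab.symm, hbd, hbc, had, hac, hcd.symm⟩]
      ring
    · rw [if_neg hd, zero_mul]
      have hempty : ((labelings n).filter fun f : V → Fin K =>
          Sym2.map f s(a, b) = s(i, j) ∧ Sym2.map f s(c, d) = s(k, l)) = ∅ := by
        apply Finset.filter_eq_empty_iff.2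
        intro f _
        rintro ⟨h1, h2⟩
        rw [Sym2.map_pair_eq, Sym2.eq_iff] at h1 h2
        rw [not_sdisj_iff] at hd
        rcases hd with h | h | h | h <;> subst h <;>
          rcases h1 with ⟨e1, e2⟩ | ⟨e1, e2⟩ <;> rcases h2 with ⟨e3, e4⟩ | ⟨e3, e4⟩ <;>
          simp_all
      rw [hempty, Finset.card_empty, zero_mul]

lemma RR_sum (hij : i ≠ j) (hik : i ≠ k) (hil : i ≠ l) (hjk : j ≠ k)
    (hjl : j ≠ l) (hkl : k ≠ l) :
    (∑ f ∈ labelings (V := V) n, Rcount G f i j * Rcount G f k l)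
        * (Fintype.card V * (Fintype.card V - 1) * (Fintype.card V - 2) * (Fintype.card V - 3))
      = (∑ e ∈ G.edgeFinset, ∑ e' ∈ G.edgeFinset, if SDisj e e' then (1 : ℕ) else 0)
          * (4 * ((labelings (V := V) n).card * (n i * (n j * (n k * n l))))) := by
  have hmul : ∀ (P Q : Prop) (iP : Decidable P) (iQ : Decidable Q),
      (if P then (1 : ℕ) else 0) * (if Q then (1 : ℕ) else 0) = if P ∧ Q then 1 else 0 := by
    intro P Q iP iQ
    by_cases hP : P <;> by_cases hQ : Q <;> simp [hP, hQ]
  unfold Rcount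
  simp only [Finset.card_filter]
  simp only [Finset.sum_mul_sum]
  rw [Finset.sum_comm]
  conv_lhs => enter [1, 2, e]; rw [Finset.sum_comm]
  simp only [hmul]
  rw [Finset.sum_mul, Finset.sum_mul]
  apply Finset.sum_congr rfl
  intro e he
  rw [Finset.sum_mul, Finset.sum_mul]
  apply Finset.sum_congr rfl
  intro e' he'
  rw [← Finset.card_filter]
  exact edge_pair_count n i j k l G hij hik hil hjk hjl hkl e e' he he'

lemma degree_eq_sum (t : V) :
    G.degree t = ∑ e ∈ G.edgeFinset, if t ∈ e then (1 : ℕ) else 0 := by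
  rw [← SimpleGraph.card_incidenceFinset_eq_degree, SimpleGraph.incidenceFinset_eq_filter,
    Finset.card_filter]

lemma pair_inter (e e' : Sym2 V) (he : e ∈ G.edgeFinset) (he' : e' ∈ G.edgeFinset) :
    (∑ t : V, (if t ∈ e then (1 : ℕ) else 0) * (if t ∈ e' then 1 else 0))
      = (if SDisj e e' then 0 else 1) + (if e = e' then (1 : ℕ) else 0) := by
  induction e using Sym2.inductionOn with
  | hf a b =>
  induction e' using Sym2.inductionOn with
  | hf c d =>
    have hab : a ≠ b := G.ne_of_adj (G.mem_edgeSet.mp (SimpleGraph.mem_edgeFinset.mp he))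
    have hcd : c ≠ d := G.ne_of_adj (G.mem_edgeSet.mp (SimpleGraph.mem_edgeFinset.mp he'))
    have single : ∀ u v : V,
        (∑ t : V, (if t = u then (1 : ℕ) else 0) * (if t = v then 1 else 0))
          = if u = v then 1 else 0 := by
      intro u v
      rw [Finset.sum_eq_single u]
      · by_cases h : u = v <;> simp [h]
      · intro t _ ht; simp [ht]
      · intro h; simp at h
    have expand : ∀ t : V,
        (if t ∈ s(a, b) then (1 : ℕ) else 0) * (if t ∈ s(c, d) then 1 else 0)
        = ((if t = a then (1 : ℕ) else 0) * (if t = c then 1 else 0)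
            + (if t = a then (1 : ℕ) else 0) * (if t = d then 1 else 0))
          + ((if t = b then (1 : ℕ) else 0) * (if t = c then 1 else 0)
            + (if t = b then (1 : ℕ) else 0) * (if t = d then 1 else 0)) := by
      intro t
      simp only [Sym2.mem_iff]
      by_cases h1 : t = a <;> by_cases h2 : t = b <;> by_cases h3 : t = c <;>
        by_cases h4 : t = d <;> simp_all
    simp only [expand]
    rw [Finset.sum_add_distrib, Finset.sum_add_distrib, Finset.sum_add_distrib,
      single, single, single, single]
    have hS : SDisj s(a, b) s(c, d) ↔ ¬(a = c ∨ a = d ∨ b = c ∨ b = d) := by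
      rw [← not_sdisj_iff, not_not]
    by_cases h1 : a = c <;> by_cases h2 : a = d <;> by_cases h3 : b = c <;>
      by_cases h4 : b = d <;> simp_all [hS, Sym2.eq_iff]

lemma share_count :
    (∑ e ∈ G.edgeFinset, ∑ e' ∈ G.edgeFinset, if SDisj e e' then (1 : ℕ) else 0)
        + (∑ t : V, G.degree t ^ 2)
      = G.edgeFinset.card * G.edgeFinset.card + G.edgeFinset.card := by
  have hdeg : (∑ t : V, G.degree t ^ 2)
      = ∑ e ∈ G.edgeFinset, ∑ e' ∈ G.edgeFinset,
          ((if SDisj e e' then 0 else 1) + (if e = e' then (1 : ℕ) else 0)) := by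
    have h1 : ∀ t : V, G.degree t ^ 2 = ∑ e ∈ G.edgeFinset, ∑ e' ∈ G.edgeFinset,
        (if t ∈ e then (1 : ℕ) else 0) * (if t ∈ e' then 1 else 0) := by
      intro t
      rw [pow_two, degree_eq_sum G, Finset.sum_mul_sum]
    simp only [h1]
    rw [Finset.sum_comm]
    apply Finset.sum_congr rfl
    intro e he
    rw [Finset.sum_comm]
    apply Finset.sum_congr rfl
    intro e' he'
    exact pair_inter G e e' he he'
  rw [hdeg, ← Finset.sum_add_distrib]
  have combine : ∀ e ∈ G.edgeFinset,
      ((∑ e' ∈ G.edgeFinset, if SDisj e e' then (1 : ℕ) else 0)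
        + ∑ e' ∈ G.edgeFinset, ((if SDisj e e' then 0 else 1) + (if e = e' then (1 : ℕ) else 0)))
      = G.edgeFinset.card + 1 := by
    intro e he
    rw [← Finset.sum_add_distrib]
    have point : ∀ e' : Sym2 V,
        ((if SDisj e e' then (1 : ℕ) else 0)
          + ((if SDisj e e' then 0 else 1) + (if e = e' then (1 : ℕ) else 0)))
        = 1 + (if e = e' then (1 : ℕ) else 0) := by
      intro e'
      by_cases hS : SDisj e e' <;> simp [hS]
    simp only [point]
    rw [Finset.sum_add_distrib, Finset.sum_const, smul_eq_mul, mul_one, Finset.sum_ite_eq,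
      if_pos he]
  rw [Finset.sum_congr rfl combine, Finset.sum_const, smul_eq_mul]
  ring


lemma exists_labeling_aux (k₀ : Fin K) (T : Finset (Fin K)) :
    ∀ S : Finset V, (∑ t ∈ T, n t) = S.card →
      ∃ f : V → Fin K, ∀ t, (S.filter fun x => f x = t).card = if t ∈ T then n t else 0 := by
  induction T using Finset.induction_on with
  | empty =>
    intro S hS
    refine ⟨fun _ => k₀, fun t => ?_⟩
    have : S = ∅ := Finset.card_eq_zero.mp (by simpa using hS.symm)
    simp [this]
  | @insert p T hp ih =>
    intro S hS
    rw [Finset.sum_insert hp] at hS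
    have hle : n p ≤ S.card := by omega
    obtain ⟨S', hS'S, hS'card⟩ := Finset.exists_subset_card_eq hle
    obtain ⟨f, hf⟩ := ih (S \ S') (by rw [Finset.card_sdiff_of_subset hS'S, hS'card]; omega)
    refine ⟨fun x => if x ∈ S' then p else f x, fun t => ?_⟩
    by_cases ht : t = p
    · subst ht
      have hfp : ((S \ S').filter fun x => f x = t) = ∅ := by
        apply Finset.card_eq_zero.mp
        rw [hf t, if_neg hp]
      have : (S.filter fun x => (if x ∈ S' then t else f x) = t) = S' := by
        ext x
        simp only [Finset.mem_filter]
        constructor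
        · rintro ⟨hxS, hx⟩
          by_contra hxS'
          rw [if_neg hxS'] at hx
          have : x ∈ (S \ S').filter fun x => f x = t := by
            simp [Finset.mem_sdiff, hxS, hxS', hx]
          rw [hfp] at this
          simp at this
        · intro hxS'
          exact ⟨hS'S hxS', by rw [if_pos hxS']⟩
      rw [this, hS'card, if_pos (Finset.mem_insert_self _ _)]
    · have : (S.filter fun x => (if x ∈ S' then p else f x) = t)
          = ((S \ S').filter fun x => f x = t) := by
        ext x
        simp only [Finset.mem_filter, Finset.mem_sdiff]
        constructor
        · rintro ⟨hxS, hx⟩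
          by_cases hxS' : x ∈ S'
          · rw [if_pos hxS'] at hx; exact absurd hx.symm ht
          · rw [if_neg hxS'] at hx; exact ⟨⟨hxS, hxS'⟩, hx⟩
        · rintro ⟨⟨hxS, hxS'⟩, hx⟩
          exact ⟨hxS, by rw [if_neg hxS']; exact hx⟩
      rw [this, hf t]
      by_cases hT : t ∈ T <;> simp [hT, ht, Finset.mem_insert]

lemma labelings_nonempty (k₀ : Fin K) (hsum : ∑ t, n t = Fintype.card V) :
    ((labelings (V := V) n)).Nonempty := by
  obtain ⟨f, hf⟩ := exists_labeling_aux n k₀ (Finset.univ : Finset (Fin K)) (Finset.univ : Finset V)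
    (by rw [hsum, Finset.card_univ])
  refine ⟨f, ?_⟩
  simp only [labelings, Finset.mem_filter, Finset.mem_univ, true_and]
  intro t
  simpa using hf t

end Aux








theorem stmt_14 (G : SimpleGraph V) [DecidableRel G.Adj]
    (n : Fin K → ℕ) (N : ℕ) (hN : N = Fintype.card V) (hN4 : 4 ≤ N)
    (hsum : ∑ k, n k = N) (i j k l : Fin K)
    (hij : i ≠ j) (hik : i ≠ k) (hil : i ≠ l) (hjk : j ≠ k) (hjl : j ≠ l) (hkl : k ≠ l)
    (m D : ℝ) (hm : m = (G.edgeFinset.card : ℝ))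
    (hD : D = ∑ t : V, (G.degree t : ℝ) ^ 2) :
    covar n (fun f : V → Fin K => (Rcount G f i j : ℝ))
        (fun f : V → Fin K => (Rcount G f k l : ℝ))
      = (m ^ 2 - D + m) * (4 * (n i : ℝ) * (n j : ℝ) * (n k : ℝ) * (n l : ℝ)
            / ((N : ℝ) * ((N : ℝ) - 1) * ((N : ℝ) - 2) * ((N : ℝ) - 3)))
        - (2 * m * (n i : ℝ) * (n j : ℝ) / ((N : ℝ) * ((N : ℝ) - 1)))
          * (2 * m * (n k : ℝ) * (n l : ℝ) / ((N : ℝ) * ((N : ℝ) - 1))) := by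
  classical
  have hNV : Fintype.card V = N := hN.symm
  have hLne : ((labelings (V := V) n).card : ℝ) ≠ 0 := by
    have hne := labelings_nonempty n i (by rw [hsum, hN])
    exact_mod_cast (Finset.Nonempty.card_pos hne).ne'
  have c0 : ((Fintype.card V : ℕ) : ℝ) = (N : ℝ) := by rw [hNV]
  have c1 : ((Fintype.card V - 1 : ℕ) : ℝ) = (N : ℝ) - 1 := by
    rw [hNV, Nat.cast_sub (by omega)]; norm_num
  have c2 : ((Fintype.card V - 2 : ℕ) : ℝ) = (N : ℝ) - 2 := by
    rw [hNV, Nat.cast_sub (by omega)]; norm_num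
  have c3 : ((Fintype.card V - 3 : ℕ) : ℝ) = (N : ℝ) - 3 := by
    rw [hNV, Nat.cast_sub (by omega)]; norm_num
  have hNr : (4 : ℝ) ≤ (N : ℝ) := by exact_mod_cast hN4
  have hQ2 : (N : ℝ) * ((N : ℝ) - 1) ≠ 0 :=
    mul_ne_zero (by linarith) (by linarith)
  have hQ4 : (N : ℝ) * ((N : ℝ) - 1) * ((N : ℝ) - 2) * ((N : ℝ) - 3) ≠ 0 :=
    mul_ne_zero (mul_ne_zero hQ2 (by linarith)) (by linarith)
  have hEX : _root_.expect n (fun f : V → Fin K => (Rcount G f i j : ℝ))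
      = 2 * m * (n i : ℝ) * (n j : ℝ) / ((N : ℝ) * ((N : ℝ) - 1)) := by
    have h := Rcount_sum n G i j hij
    have h' : (∑ f ∈ labelings (V := V) n, (Rcount G f i j : ℝ))
        * ((N : ℝ) * ((N : ℝ) - 1))
        = 2 * (G.edgeFinset.card : ℝ) * (((labelings (V := V) n).card : ℝ)
            * ((n i : ℝ) * (n j : ℝ))) := by
      have hc := congrArg (Nat.cast (R := ℝ)) h
      push_cast at hc
      rw [c0, c1] at hc
      linear_combination hc
    unfold _root_.expect
    rw [div_eq_div_iff hLne hQ2, hm]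
    linear_combination h'
  have hEY : _root_.expect n (fun f : V → Fin K => (Rcount G f k l : ℝ))
      = 2 * m * (n k : ℝ) * (n l : ℝ) / ((N : ℝ) * ((N : ℝ) - 1)) := by
    have h := Rcount_sum n G k l hkl
    have h' : (∑ f ∈ labelings (V := V) n, (Rcount G f k l : ℝ))
        * ((N : ℝ) * ((N : ℝ) - 1))
        = 2 * (G.edgeFinset.card : ℝ) * (((labelings (V := V) n).card : ℝ)
            * ((n k : ℝ) * (n l : ℝ))) := by
      have hc := congrArg (Nat.cast (R := ℝ)) h
      push_cast at hc
      rw [c0, c1] at hc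
      linear_combination hc
    unfold _root_.expect
    rw [div_eq_div_iff hLne hQ2, hm]
    linear_combination h'
  have hEXY : _root_.expect n
        (fun f : V → Fin K => (Rcount G f i j : ℝ) * (Rcount G f k l : ℝ))
      = (m ^ 2 - D + m) * (4 * (n i : ℝ) * (n j : ℝ) * (n k : ℝ) * (n l : ℝ)
          / ((N : ℝ) * ((N : ℝ) - 1) * ((N : ℝ) - 2) * ((N : ℝ) - 3))) := by
    set dis : ℕ := ∑ e ∈ G.edgeFinset, ∑ e' ∈ G.edgeFinset,
      if SDisj e e' then (1 : ℕ) else 0 with hdis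
    have hshR : (dis : ℝ) = m ^ 2 + m - D := by
      have hc := congrArg (Nat.cast (R := ℝ)) (share_count G)
      push_cast at hc
      rw [hm, hD, hdis]
      push_cast
      linear_combination hc
    have h := RR_sum n i j k l G hij hik hil hjk hjl hkl
    rw [← hdis] at h
    have h' : (∑ f ∈ labelings (V := V) n, (Rcount G f i j : ℝ) * (Rcount G f k l : ℝ))
        * ((N : ℝ) * ((N : ℝ) - 1) * ((N : ℝ) - 2) * ((N : ℝ) - 3))
        = (dis : ℝ) * (4 * (((labelings (V := V) n).card : ℝ)
            * ((n i : ℝ) * ((n j : ℝ) * ((n k : ℝ) * (n l : ℝ)))))) := by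
      have hc := congrArg (Nat.cast (R := ℝ)) h
      push_cast at hc
      rw [c0, c1, c2, c3] at hc
      linear_combination hc
    unfold _root_.expect
    rw [mul_div_assoc', div_eq_div_iff hLne hQ4,
      show m ^ 2 - D + m = (dis : ℝ) from by linarith [hshR]]
    linear_combination h'
  rw [covar_eq]
  simp only [hEXY, hEX, hEY]
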